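/- Let X be a nonempty finite set and c a choice correspondence on X. Then c satisfies path independence if and only if there exists a non-degenerate tie-break rule π such that the induced stochastic choice p_{π|c} is regular. -/

import Mathlib

open Finset

variable {X : Type*}

/-- `c` is a choice correspondence: on every nonempty menu it selects a
nonempty subset of the menu. -/
def IsChoice (c : Finset X → Finset X) : Prop :=
  ∀ A : Finset X, A.Nonempty → c A ⊆ A ∧ (c A).Nonempty

/-- The logit rule `p_{u|c}`. -/
noncomputable def logit [DecidableEq X] (u : X → ℝ) (c : Finset X → Finset X) (x : X) (A : Finset X) : ℝ :=
  if x ∈ c A then u x / ∑ b ∈ c A, u b else 0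

/-- Regularity of a stochastic choice function. -/
def Regular (p : X → Finset X → ℝ) : Prop :=
  ∀ A B : Finset X, A ⊆ B → ∀ x ∈ A, p x A ≥ p x B

/-- Sen's property α. -/
def PropAlpha (c : Finset X → Finset X) : Prop :=
  ∀ A B : Finset X, A ⊆ B → ∀ x ∈ A, x ∈ c B → x ∈ c A

/-- Property β. -/
def PropBeta (c : Finset X → Finset X) : Prop :=
  ∀ A B : Finset X, A ⊆ B → ∀ x ∈ c A, ∀ y ∈ c A, (x ∈ c B ↔ y ∈ c B)

/-- Property θ. -/
def PropTheta [DecidableEq X] (c : Finset X → Finset X) : Prop :=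
  ∀ A B : Finset X, A ⊆ B → (c A ∩ c B).Nonempty → (c A).card ≤ (c B).card

/-- Path independence. -/
def PathIndep [DecidableEq X] (c : Finset X → Finset X) : Prop :=
  ∀ A B : Finset X, A.Nonempty → B.Nonempty → c (A ∪ B) = c (c A ∪ c B)

/-- The revealed relation `R`: `x R y` iff some menu contains both, `x` is
chosen and `y` is not. -/
def Rev (c : Finset X → Finset X) (x y : X) : Prop :=
  ∃ A : Finset X, x ∈ c A ∧ y ∈ A ∧ y ∉ c A

/-- `u` is aligned with the revealed relation `R`. -/
def AlignedRev (c : Finset X → Finset X) (u : X → ℝ) : Prop :=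
  ∀ x y, Rev c x y → u y < u x

/-- `c` is represented as a General Threshold Luce Model by `(v, ε)`. -/
def GTLMRep (c : Finset X → Finset X) (v : X → ℝ) (ε : Finset X → ℝ) : Prop :=
  (∀ x, 0 < v x) ∧ (∀ A, 0 ≤ ε A) ∧
    ∀ A : Finset X, A.Nonempty → ∀ x, (x ∈ c A ↔ x ∈ A ∧ ∀ y ∈ A, v y - v x ≤ ε A)

/-- `c` is a General Threshold Luce Model. -/
def IsGTLM (c : Finset X → Finset X) : Prop :=
  ∃ (v : X → ℝ) (ε : Finset X → ℝ), GTLMRep c v ε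

/-- The welfare of a menu under utility `u`. -/
noncomputable def Welfare [DecidableEq X] (u : X → ℝ) (c : Finset X → Finset X) (A : Finset X) : ℝ :=
  ∑ a ∈ A, u a * logit u c a A

/-- A utility function on `X` is strongly concave if for some enumeration of
`X` differences are decreasing in the strong sense. -/
def StronglyConcaveFn [Fintype X] (u : X → ℝ) : Prop :=
  ∃ e : Fin (Fintype.card X) ≃ X, ∀ l k m : Fin (Fintype.card X),
    l < k → k < m → u (e m) - u (e k) ≤ u (e k) - u (e l)

/-- A utility function on `X` is strongly convex if for some enumeration of
`X` differences are increasing in the strong sense. -/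
def StronglyConvexFn [Fintype X] (u : X → ℝ) : Prop :=
  ∃ e : Fin (Fintype.card X) ≃ X, ∀ l k m : Fin (Fintype.card X),
    l < k → k < m → u (e k) - u (e l) ≤ u (e m) - u (e k)

/-- A non-degenerate tie-break rule. -/
def TieBreak {X : Type*} (pi : X → Finset X → ℝ) : Prop :=
  ∀ S : Finset X, S.Nonempty →
    (∀ x ∈ S, 0 < pi x S) ∧ (∀ x, x ∉ S → pi x S = 0) ∧ (∑ x ∈ S, pi x S = 1)


section Aux
variable {X : Type*} [DecidableEq X]

/-- tail-compatibility of a list with `c`. -/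
def TCaux (c : Finset X → Finset X) : List X → Prop
  | [] => True
  | a :: t => a ∈ c ((a :: t).toFinset) ∧ TCaux c t

/-- first element of `l` belonging to `S`. -/
def fstO (S : Finset X) (l : List X) : Option X := l.find? (fun a => a ∈ S)

lemma fstO_mem_self {S : Finset X} {l : List X} {a : X} (h : fstO S l = some a) : a ∈ S := by
  have := List.find?_some h
  simpa using this

lemma fstO_mem_list {S : Finset X} {l : List X} {a : X} (h : fstO S l = some a) : a ∈ l :=
  List.mem_of_find?_eq_some h

lemma fstO_isSome {S : Finset X} {l : List X} {x : X} (hx : x ∈ S) (hxl : x ∈ l) :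
    ∃ a, fstO S l = some a := by
  rcases h : fstO S l with _ | a
  · rw [fstO, List.find?_eq_none] at h
    exact absurd (by simpa using hx) (h x hxl)
  · exact ⟨a, rfl⟩

lemma fstO_cons_pos {S : Finset X} {a : X} {t : List X} (h : a ∈ S) :
    fstO S (a :: t) = some a := by
  unfold fstO
  rw [List.find?_cons_of_pos (by simpa using h)]

lemma fstO_cons_neg {S : Finset X} {a : X} {t : List X} (h : a ∉ S) :
    fstO S (a :: t) = fstO S t := by
  unfold fstO
  rw [List.find?_cons_of_neg (by simpa using h)]

lemma fstO_min {S : Finset X} {l : List X} {a b : X} (h : fstO S l = some a)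
    (hb : b ∈ S) (hbl : b ∈ l) : l.idxOf a ≤ l.idxOf b := by
  induction l with
  | nil => simp at hbl
  | cons x t ih =>
    by_cases hx : x ∈ S
    · rw [fstO_cons_pos hx] at h
      obtain rfl : x = a := by simpa using h
      simp [List.idxOf_cons_self]
    · rw [fstO_cons_neg hx] at h
      have hba : b ≠ x := fun e => hx (e ▸ hb)
      have hax : a ≠ x := fun e => hx (e ▸ fstO_mem_self h)
      have hbt : b ∈ t := by
        rcases List.mem_cons.mp hbl with e | e
        · exact absurd e hba
        · exact e
      rw [List.idxOf_cons_ne _ (Ne.symm hax), List.idxOf_cons_ne _ (Ne.symm hba)]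
      exact Nat.succ_le_succ (ih h hbt)

end Aux


section Aux2
variable {X : Type*} [DecidableEq X] {c : Finset X → Finset X}

def PathIndep' [DecidableEq X] (c : Finset X → Finset X) : Prop :=
  ∀ A B : Finset X, A.Nonempty → B.Nonempty → c (A ∪ B) = c (c A ∪ c B)

def IsChoice' (c : Finset X → Finset X) : Prop :=
  ∀ A : Finset X, A.Nonempty → c A ⊆ A ∧ (c A).Nonempty

lemma pi_idem (hc : IsChoice' c) (hPI : PathIndep' c) {A : Finset X} (hA : A.Nonempty) :
    c (c A) = c A := by
  have h := hPI A A hA hA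
  rw [union_self, union_self] at h
  exact h.symm

lemma pi_alpha (hc : IsChoice' c) (hPI : PathIndep' c) {A B : Finset X} {x : X}
    (hAB : A ⊆ B) (hxA : x ∈ A) (hxB : x ∈ c B) : x ∈ c A := by
  by_cases hBA : B ⊆ A
  · rwa [Finset.Subset.antisymm hAB hBA]
  · have hD : (B \ A).Nonempty := by
      rw [Finset.sdiff_nonempty]; exact hBA
    have hU : A ∪ B \ A = B := Finset.union_sdiff_of_subset hAB
    have h := hPI A (B \ A) ⟨x, hxA⟩ hD
    rw [hU] at h
    have hcA : (c A).Nonempty := (hc A ⟨x, hxA⟩).2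
    have hcD : (c (B \ A)).Nonempty := (hc _ hD).2
    have hsub : c (c A ∪ c (B \ A)) ⊆ c A ∪ c (B \ A) :=
      (hc _ (hcA.mono subset_union_left)).1
    have hx' : x ∈ c A ∪ c (B \ A) := hsub (h ▸ hxB)
    rcases Finset.mem_union.mp hx' with h' | h'
    · exact h'
    · exact absurd ((hc _ hD).1 h') (by simp [hxA])

lemma pi_aiz (hc : IsChoice' c) (hPI : PathIndep' c) {A B : Finset X}
    (h1 : c B ⊆ A) (h2 : A ⊆ B) (hB : B.Nonempty) : c A = c B := by
  have hcB : (c B).Nonempty := (hc B hB).2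
  have hA : A.Nonempty := hcB.mono h1
  have hcA : (c A).Nonempty := (hc A hA).2
  calc c A = c (A ∪ c B) := by rw [Finset.union_eq_left.mpr h1]
    _ = c (c A ∪ c (c B)) := hPI A (c B) hA hcB
    _ = c (c A ∪ c B) := by rw [pi_idem hc hPI hB]
    _ = c (A ∪ B) := (hPI A B hA hB).symm
    _ = c B := by rw [Finset.union_eq_right.mpr h2]

/-- tail-compatible lists pick a chosen element first, from any menu inside. -/
lemma TC_first (hc : IsChoice' c) (hPI : PathIndep' c) :
    ∀ (l : List X), TCaux c l → ∀ S : Finset X, S.Nonempty → S ⊆ l.toFinset →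
      ∃ a, fstO S l = some a ∧ a ∈ c S := by
  intro l
  induction l with
  | nil => intro _ S hS hsub; simp at hsub; simp [hsub] at hS
  | cons a t ih =>
    intro hTC S hS hsub
    by_cases ha : a ∈ S
    · refine ⟨a, fstO_cons_pos ha, ?_⟩
      exact pi_alpha hc hPI hsub ha hTC.1
    · have hsub' : S ⊆ t.toFinset := by
        intro y hy
        have := hsub hy
        simp only [List.toFinset_cons, Finset.mem_insert] at this
        rcases this with e | e
        · exact absurd (e ▸ hy) ha
        · exact e
      obtain ⟨b, hb, hbc⟩ := ih hTC.2 S hS hsub'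
      exact ⟨b, (fstO_cons_neg ha).trans hb, hbc⟩

/-- greedy: an ordering of R, tail-compatible, with x first in B. -/
lemma greedy (hc : IsChoice' c) (hPI : PathIndep' c) :
    ∀ (n : ℕ) (R B : Finset X) (x : X), R.card ≤ n → B.Nonempty → x ∈ c B → B ⊆ R →
      ∃ l : List X, l.Nodup ∧ l.toFinset = R ∧ TCaux c l ∧ fstO B l = some x := by
  -- first, unconstrained greedy
  have G0 : ∀ (n : ℕ) (R : Finset X), R.card ≤ n →
      ∃ l : List X, l.Nodup ∧ l.toFinset = R ∧ TCaux c l := by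
    intro n
    induction n with
    | zero =>
      intro R hR
      have : R = ∅ := Finset.card_eq_zero.mp (Nat.le_zero.mp hR)
      exact ⟨[], by simp [this, TCaux]⟩
    | succ n ih =>
      intro R hR
      rcases R.eq_empty_or_nonempty with rfl | hRne
      · exact ⟨[], by simp [TCaux]⟩
      · obtain ⟨a, ha⟩ := (hc R hRne).2
        have haR : a ∈ R := (hc R hRne).1 ha
        obtain ⟨l', h1, h2, h3⟩ := ih (R.erase a) (by
          have := Finset.card_erase_of_mem haR
          omega)
        refine ⟨a :: l', ?_, ?_, ?_⟩
        · simp only [List.nodup_cons]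
          exact ⟨by rw [← List.mem_toFinset, h2]; simp, h1⟩
        · simp [h2, Finset.insert_erase haR]
        · constructor
          · show a ∈ c ((a :: l').toFinset)
            rw [List.toFinset_cons, h2, Finset.insert_erase haR]
            exact ha
          · exact h3
  intro n
  induction n with
  | zero =>
    intro R B x hR hB hx hBR
    obtain ⟨b, hb⟩ := hB
    exact absurd (Finset.card_eq_zero.mp (Nat.le_zero.mp hR) ▸ hBR hb) (Finset.notMem_empty b)
  | succ n ih =>
    intro R B x hR hB hx hBR
    have hRne : R.Nonempty := hB.mono hBR
    by_cases hcr : c R ⊆ B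
    · -- c R = c B, so x ∈ c R; put x first
      have hcBR : c B = c R := pi_aiz hc hPI hcr hBR hRne
      have hxR : x ∈ c R := by rw [← hcBR]; exact hx
      have hxRm : x ∈ R := (hc R hRne).1 hxR
      obtain ⟨l', h1, h2, h3⟩ := G0 n (R.erase x) (by
        have := Finset.card_erase_of_mem hxRm
        omega)
      refine ⟨x :: l', ?_, ?_, ?_, ?_⟩
      · simp only [List.nodup_cons]
        exact ⟨by rw [← List.mem_toFinset, h2]; simp, h1⟩
      · simp [h2, Finset.insert_erase hxRm]
      · constructor
        · show x ∈ c ((x :: l').toFinset)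
          rw [List.toFinset_cons, h2, Finset.insert_erase hxRm]
          exact hxR
        · exact h3
      · exact fstO_cons_pos ((hc B hB).1 hx)
    · obtain ⟨a, hac, haB⟩ := Finset.not_subset.mp hcr
      have haR : a ∈ R := (hc R hRne).1 hac
      have hBR' : B ⊆ R.erase a := fun b hb =>
        Finset.mem_erase.mpr ⟨fun e => haB (e ▸ hb), hBR hb⟩
      obtain ⟨l', h1, h2, h3, h4⟩ := ih (R.erase a) B x (by
        have := Finset.card_erase_of_mem haR
        omega) hB hx hBR'
      refine ⟨a :: l', ?_, ?_, ?_, ?_⟩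
      · simp only [List.nodup_cons]
        exact ⟨by rw [← List.mem_toFinset, h2]; simp, h1⟩
      · simp [h2, Finset.insert_erase haR]
      · constructor
        · show a ∈ c ((a :: l').toFinset)
          rw [List.toFinset_cons, h2, Finset.insert_erase haR]
          exact hac
        · exact h3
      · exact (fstO_cons_neg haB).trans h4

end Aux2

section Aux3
variable {X : Type*} [DecidableEq X] [Fintype X] {c : Finset X → Finset X}

/-- the key monotonicity: for a full tail-compatible list, if the first element
of `c B` is `x ∈ A ⊆ B`, then the first element of `c A` is also `x`. -/
lemma key_mono (hc : IsChoice' c) (hPI : PathIndep' c) {l : List X} {A B : Finset X} {x : X}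
    (hnd : l.Nodup) (hfull : l.toFinset = Finset.univ) (hTC : TCaux c l)
    (hAB : A ⊆ B) (hxA : x ∈ A) (hfB : fstO (c B) l = some x) :
    fstO (c A) l = some x := by
  have hmem : ∀ y : X, y ∈ l := fun y => by
    rw [← List.mem_toFinset, hfull]; exact Finset.mem_univ y
  have hxB : x ∈ B := hAB hxA
  have hAne : A.Nonempty := ⟨x, hxA⟩
  have hBne : B.Nonempty := ⟨x, hxB⟩
  have hxcB : x ∈ c B := fstO_mem_self hfB
  have hxcA : x ∈ c A := pi_alpha hc hPI hAB hxA hxcB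
  have hsubl : ∀ S : Finset X, S ⊆ l.toFinset := fun S => by
    rw [hfull]; exact Finset.subset_univ S
  -- step 1 : fstO B l = some x
  obtain ⟨z, hz, hzc⟩ := TC_first hc hPI l hTC B hBne (hsubl B)
  have hzx : z = x := by
    have h1 : l.idxOf z ≤ l.idxOf x := fstO_min hz hxB (hmem x)
    have h2 : l.idxOf x ≤ l.idxOf z := fstO_min hfB hzc (hmem z)
    exact (List.idxOf_inj (hmem z)).mp (le_antisymm h1 h2)
  rw [hzx] at hz
  -- step 2 : fstO A l = some x
  obtain ⟨w, hw, hwc⟩ := TC_first hc hPI l hTC A hAne (hsubl A)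
  have hwx : w = x := by
    have hwB : w ∈ B := hAB ((hc A hAne).1 hwc)
    have h1 : l.idxOf w ≤ l.idxOf x := fstO_min hw hxA (hmem x)
    have h2 : l.idxOf x ≤ l.idxOf w := fstO_min hz hwB (hmem w)
    exact (List.idxOf_inj (hmem w)).mp (le_antisymm h1 h2)
  rw [hwx] at hw
  -- step 3 : fstO (c A) l = some x
  obtain ⟨u, hu⟩ := fstO_isSome hxcA (hmem x)
  have hucA : u ∈ c A := fstO_mem_self hu
  have hux : u = x := by
    have h1 : l.idxOf u ≤ l.idxOf x := fstO_min hu hxcA (hmem x)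
    have h2 : l.idxOf x ≤ l.idxOf u := fstO_min hw ((hc A hAne).1 hucA) (hmem u)
    exact (List.idxOf_inj (hmem u)).mp (le_antisymm h1 h2)
  rw [hux] at hu
  exact hu

end Aux3
section Aux4
variable {X : Type*} [DecidableEq X] [Fintype X]

instance TCaux.decidable (c : Finset X → Finset X) : DecidablePred (TCaux c)
  | [] => isTrue trivial
  | a :: t => @instDecidableAnd _ _ inferInstance (TCaux.decidable c t)

/-- The finset of all enumerations of `X`. -/
noncomputable def permsF (X : Type*) [Fintype X] [DecidableEq X] : Finset (List X) :=
  ⟨((Finset.univ (α := X)).toList.permutations : Multiset (List X)),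
    Multiset.coe_nodup.mpr (List.nodup_permutations _ (Finset.nodup_toList _))⟩

lemma mem_permsF {l : List X} :
    l ∈ permsF X ↔ l.Nodup ∧ l.toFinset = Finset.univ := by
  have h : l ∈ permsF X ↔ List.Perm l ((Finset.univ (α := X)).toList) := by
    rw [permsF, Finset.mem_mk, Multiset.mem_coe, List.mem_permutations]
  rw [h]
  constructor
  · intro hp
    refine ⟨hp.nodup_iff.mpr (Finset.nodup_toList _), ?_⟩
    ext y
    simp [List.mem_toFinset, hp.mem_iff]
  · rintro ⟨h1, h2⟩
    apply List.perm_of_nodup_nodup_toFinset_eq h1 (Finset.nodup_toList _)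
    rw [h2, Finset.toList_toFinset]

/-- number of compatible enumerations whose first element in `S` is `x`. -/
noncomputable def Ncnt (c : Finset X → Finset X) (S : Finset X) (x : X) : ℕ :=
  ((permsF X).filter (fun l => TCaux c l ∧ fstO S l = some x)).card

/-- number of compatible enumerations. -/
noncomputable def Mcnt (c : Finset X → Finset X) : ℕ :=
  ((permsF X).filter (fun l => TCaux c l)).card

variable {c : Finset X → Finset X}

lemma Ncnt_le_M {S : Finset X} {x : X} : Ncnt c S x ≤ Mcnt c := by
  apply Finset.card_le_card
  intro l hl
  simp only [Finset.mem_filter] at hl ⊢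
  exact ⟨hl.1, hl.2.1⟩

lemma Ncnt_eq_zero {S : Finset X} {x : X} (hx : x ∉ S) : Ncnt c S x = 0 := by
  rw [Ncnt, Finset.card_eq_zero]
  apply Finset.filter_eq_empty_iff.mpr
  rintro l _ ⟨_, hf⟩
  exact hx (fstO_mem_self hf)

lemma Ncnt_pos (hc : IsChoice' c) (hPI : PathIndep' c) {S : Finset X} {x : X}
    (hS : S.Nonempty) (hx : x ∈ c S) : 0 < Ncnt c S x := by
  obtain ⟨l, h1, h2, h3, h4⟩ := greedy hc hPI (Finset.univ (α := X)).card Finset.univ S x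
    le_rfl hS hx (Finset.subset_univ S)
  rw [Ncnt]
  apply Finset.card_pos.mpr
  exact ⟨l, Finset.mem_filter.mpr ⟨mem_permsF.mpr ⟨h1, h2⟩, h3, h4⟩⟩

lemma Mcnt_pos [Nonempty X] (hc : IsChoice' c) (hPI : PathIndep' c) : 0 < Mcnt c := by
  have h1 : (Finset.univ (α := X)).Nonempty := Finset.univ_nonempty
  obtain ⟨x, hx⟩ := (hc _ h1).2
  exact lt_of_lt_of_le (Ncnt_pos hc hPI h1 hx) Ncnt_le_M

lemma sum_Ncnt {S : Finset X} (hS : S.Nonempty) :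
    ∑ x ∈ S, Ncnt c S x = Mcnt c := by
  obtain ⟨x₀, hx₀⟩ := hS
  have hfull : ∀ l ∈ permsF X, ∀ y : X, y ∈ l := by
    intro l hl y
    rw [← List.mem_toFinset, (mem_permsF.mp hl).2]
    exact Finset.mem_univ y
  have key : ∀ x ∈ S, Ncnt c S x =
      (((permsF X).filter (fun l => TCaux c l)).filter
        (fun l => (fstO S l).getD x₀ = x)).card := by
    intro x hx
    rw [Ncnt, Finset.filter_filter]
    congr 1
    apply Finset.filter_congr
    intro l hl
    obtain ⟨a, ha⟩ := fstO_isSome hx₀ (hfull l hl x₀)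
    simp [ha]
  rw [Finset.sum_congr rfl key, Mcnt]
  symm
  apply Finset.card_eq_sum_card_fiberwise
  intro l hl
  have hlP : l ∈ permsF X := (Finset.mem_filter.mp hl).1
  obtain ⟨a, ha⟩ := fstO_isSome hx₀ (hfull l hlP x₀)
  show (fstO S l).getD x₀ ∈ S
  rw [ha, Option.getD_some]
  exact fstO_mem_self ha

lemma Ncnt_mono (hc : IsChoice' c) (hPI : PathIndep' c) {A B : Finset X} {x : X}
    (hAB : A ⊆ B) (hxA : x ∈ A) : Ncnt c (c B) x ≤ Ncnt c (c A) x := by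
  apply Finset.card_le_card
  intro l hl
  simp only [Finset.mem_filter] at hl ⊢
  obtain ⟨hlP, hTC, hfB⟩ := hl
  obtain ⟨hnd, hfull⟩ := mem_permsF.mp hlP
  exact ⟨hlP, hTC, key_mono hc hPI hnd hfull hTC hAB hxA hfB⟩

end Aux4

theorem stmt1' {X : Type*} [Fintype X] [Nonempty X] [DecidableEq X]
    (c : Finset X → Finset X) (hc : IsChoice' c) :
    PathIndep' c ↔
      ∃ pi : X → Finset X → ℝ, (∀ S : Finset X, S.Nonempty →
    (∀ x ∈ S, 0 < pi x S) ∧ (∀ x, x ∉ S → pi x S = 0) ∧ (∑ x ∈ S, pi x S = 1)) ∧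
      (∀ A B : Finset X, A ⊆ B → ∀ x ∈ A, pi x (c A) ≥ pi x (c B)) := by
  classical
  constructor
  · intro hPI
    have hm : 0 < Mcnt c := Mcnt_pos hc hPI
    have hmR : (0 : ℝ) < (Mcnt c : ℝ) := by exact_mod_cast hm
    refine ⟨fun x S => if c S = S then ((Ncnt c S x : ℝ) / (Mcnt c : ℝ))
      else if x ∈ S then ((S.card : ℝ))⁻¹ else 0, ?_, ?_⟩
    · intro S hS
      refine ⟨?_, ?_, ?_⟩
      · intro x hx
        by_cases h : c S = S
        · simp only [if_pos h]
          apply div_pos _ hmR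
          have : x ∈ c S := h.symm ▸ hx
          exact_mod_cast Ncnt_pos hc hPI hS this
        · simp only [if_neg h, if_pos hx]
          apply inv_pos.mpr
          exact_mod_cast Finset.card_pos.mpr hS
      · intro x hx
        by_cases h : c S = S
        · simp only [if_pos h, Ncnt_eq_zero hx, Nat.cast_zero, zero_div]
        · simp only [if_neg h, if_neg hx]
      · by_cases h : c S = S
        · simp only [if_pos h]
          rw [← Finset.sum_div]
          rw [show (∑ x ∈ S, ((Ncnt c S x : ℝ))) = ((Mcnt c : ℝ)) by
            exact_mod_cast congrArg (Nat.cast (R := ℝ)) (sum_Ncnt hS)]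
          exact div_self (ne_of_gt hmR)
        · simp only [if_neg h]
          rw [Finset.sum_congr rfl (fun x hx => if_pos hx)]
          rw [Finset.sum_const, nsmul_eq_mul]
          apply mul_inv_cancel₀
          exact_mod_cast Finset.card_ne_zero_of_mem (Finset.mem_coe.mp (hS.choose_spec))
    · intro A B hAB x hxA
      have hAne : A.Nonempty := ⟨x, hxA⟩
      have hBne : B.Nonempty := ⟨x, hAB hxA⟩
      have hfixA : c (c A) = c A := pi_idem hc hPI hAne
      have hfixB : c (c B) = c B := pi_idem hc hPI hBne
      simp only [if_pos hfixA, if_pos hfixB, ge_iff_le]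
      gcongr
      exact_mod_cast Ncnt_mono hc hPI hAB hxA
  · rintro ⟨pi, hTB, hReg⟩
    have alpha : ∀ {A B : Finset X} {x : X}, A ⊆ B → x ∈ A → x ∈ c B → x ∈ c A := by
      intro A B x hAB hxA hxB
      have hBne : B.Nonempty := ⟨x, hAB hxA⟩
      have hpos : 0 < pi x (c B) := (hTB (c B) (hc B hBne).2).1 x hxB
      have hge : pi x (c A) ≥ pi x (c B) := hReg A B hAB x hxA
      by_contra hxcA
      have h0 : pi x (c A) = 0 := (hTB (c A) (hc A ⟨x, hxA⟩).2).2.1 x hxcA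
      linarith
    have aiz : ∀ {A B : Finset X}, c B ⊆ A → A ⊆ B → B.Nonempty → c A ⊆ c B := by
      intro A B h1 h2 hB
      have hcB := hc B hB
      have hAne : A.Nonempty := hcB.2.mono h1
      have hcA := hc A hAne
      have e1 : ∑ x ∈ c A, pi x (c A) = ∑ x ∈ A, pi x (c A) :=
        Finset.sum_subset hcA.1 (fun x _ hx => (hTB _ hcA.2).2.1 x hx)
      have hS1 : ∑ x ∈ A, pi x (c A) = 1 := by
        rw [← e1]; exact (hTB _ hcA.2).2.2
      have e2 : ∑ x ∈ c B, pi x (c B) = ∑ x ∈ A, pi x (c B) :=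
        Finset.sum_subset h1 (fun x _ hx => (hTB _ hcB.2).2.1 x hx)
      have hS2 : ∑ x ∈ A, pi x (c B) = 1 := by
        rw [← e2]; exact (hTB _ hcB.2).2.2
      intro y hy
      by_contra hyB
      have hlt : ∑ x ∈ A, pi x (c B) < ∑ x ∈ A, pi x (c A) := by
        apply Finset.sum_lt_sum (fun x hx => hReg A B h2 x hx)
        refine ⟨y, hcA.1 hy, ?_⟩
        rw [(hTB _ hcB.2).2.1 y hyB]
        exact (hTB _ hcA.2).1 y hy
      rw [hS1, hS2] at hlt
      exact lt_irrefl 1 hlt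
    intro A B hA hB
    have hcA := hc A hA
    have hcB := hc B hB
    have hEne : (c A ∪ c B).Nonempty := hcA.2.mono Finset.subset_union_left
    have hEsub : c A ∪ c B ⊆ A ∪ B := Finset.union_subset
      (hcA.1.trans Finset.subset_union_left) (hcB.1.trans Finset.subset_union_right)
    have hABne : (A ∪ B).Nonempty := hA.mono Finset.subset_union_left
    have hCsub : c (A ∪ B) ⊆ c A ∪ c B := by
      intro x hx
      have hxAB : x ∈ A ∪ B := (hc _ hABne).1 hx
      rcases Finset.mem_union.mp hxAB with h | h
      · exact Finset.mem_union_left _ (alpha Finset.subset_union_left h hx)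
      · exact Finset.mem_union_right _ (alpha Finset.subset_union_right h hx)
    apply Finset.Subset.antisymm
    · intro x hx
      exact alpha hEsub (hCsub hx) hx
    · exact aiz hCsub hEsub hABne

/-- c satisfies path independence iff there is a
non-degenerate tie-break rule π such that p_{π|c} is regular. -/
theorem stmt1 {X : Type*} [Fintype X] [Nonempty X] [DecidableEq X]
    (c : Finset X → Finset X) (hc : IsChoice c) :
    PathIndep c ↔
      ∃ pi : X → Finset X → ℝ, TieBreak pi ∧ Regular (fun x A => pi x (c A)) := by
  exact stmt1' c hc
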